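/- Let A be a real n×n matrix such that every 2×2 minor is tropically nonnegative, i.e., A(i,k) + A(j,l) ≥ A(i,l) + A(j,k) for all i < j and k < l (Monge property). Then for every subset I ⊆ [n] and every cyclic permutation γ of I, the sum Σ_{j∈I} A(j, γ(j)) ≤ Σ_{j∈I} A(j,j). In particular, the identity permutation attains the tropical permanent of A: max_{σ ∈ S_n} Σ_i A(i,σ(i)) = Σ_i A(i,i). -/
import Mathlib


lemma monge_perm_le (n : ℕ) (A : Matrix (Fin n) (Fin n) ℝ)
    (hMonge : ∀ i j k l : Fin n, i < j → k < l → A i l + A j k ≤ A i k + A j l) :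
    ∀ σ : Equiv.Perm (Fin n), ∑ i, A i (σ i) ≤ ∑ i, A i i := by
  suffices H : ∀ k (σ : Equiv.Perm (Fin n)), σ.support.card ≤ k →
      ∑ i, A i (σ i) ≤ ∑ i, A i i from fun σ => H σ.support.card σ le_rfl
  intro k
  induction k with
  | zero =>
    intro σ hσ
    have : σ = 1 := by
      rw [← Equiv.Perm.support_eq_empty_iff]
      exact Finset.card_eq_zero.mp (Nat.le_zero.mp hσ)
    simp [this]
  | succ k ih =>
    intro σ hσ
    by_cases h1 : σ = 1
    · simp [h1]
    · have hne : σ.support.Nonempty := by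
        rw [Finset.nonempty_iff_ne_empty]
        simpa [Equiv.Perm.support_eq_empty_iff] using h1
      set a := σ.support.max' hne with ha_def
      have ha : a ∈ σ.support := σ.support.max'_mem hne
      have hca : σ a < a := by
        have h1 : σ a ∈ σ.support := Equiv.Perm.apply_mem_support.mpr ha
        have h2 : σ a ≤ a := Finset.le_max' _ _ h1
        exact lt_of_le_of_ne h2 (Equiv.Perm.mem_support.mp ha)
      set b := σ⁻¹ a with hb_def
      have hbmem : b ∈ σ.support := by
        rwa [← Equiv.Perm.support_inv, Equiv.Perm.apply_mem_support,
          Equiv.Perm.support_inv]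
      have hbne : b ≠ a := by
        intro h
        have : σ a = a := by
          conv_lhs => rw [← h, hb_def]
          simp
        exact (Equiv.Perm.mem_support.mp ha) this
      have hba : b < a := lt_of_le_of_ne (Finset.le_max' _ _ hbmem) hbne
      set τ : Equiv.Perm (Fin n) := σ * Equiv.swap a b with hτ_def
      have hτa : τ a = a := by simp [hτ_def, Equiv.swap_apply_left, hb_def]
      have hτb : τ b = σ a := by simp [hτ_def, Equiv.swap_apply_right]
      have hτx : ∀ x, x ≠ a → x ≠ b → τ x = σ x := by
        intro x hxa hxb
        simp [hτ_def, Equiv.swap_apply_of_ne_of_ne hxa hxb]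
      have hsub : τ.support ⊆ σ.support.erase a := by
        intro x hx
        have hx' : τ x ≠ x := Equiv.Perm.mem_support.mp hx
        have hxa : x ≠ a := by
          intro h; apply hx'; rw [h, hτa]
        refine Finset.mem_erase.mpr ⟨hxa, ?_⟩
        by_cases hxb : x = b
        · rwa [hxb]
        · rw [hτx x hxa hxb] at hx'
          exact Equiv.Perm.mem_support.mpr hx'
      have hcard : τ.support.card ≤ k := by
        have := Finset.card_le_card hsub
        have h2 : (σ.support.erase a).card < σ.support.card :=
          Finset.card_erase_lt_of_mem ha
        omega
      have hτle := ih τ hcard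
      -- compare sums of σ and τ
      have hineq : ∑ i, A i (σ i) ≤ ∑ i, A i (τ i) := by
        have hdecomp : ∀ F : Fin n → ℝ,
            ∑ i, F i = F a + (F b + ∑ i ∈ (Finset.univ.erase a).erase b, F i) := by
          intro F
          rw [Finset.add_sum_erase _ F (Finset.mem_erase.mpr ⟨hbne, Finset.mem_univ b⟩),
            Finset.add_sum_erase _ F (Finset.mem_univ a)]
        rw [hdecomp (fun i => A i (σ i)), hdecomp (fun i => A i (τ i))]
        have hrest : ∑ i ∈ (Finset.univ.erase a).erase b, A i (σ i)
            = ∑ i ∈ (Finset.univ.erase a).erase b, A i (τ i) := by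
          apply Finset.sum_congr rfl
          intro x hx
          rw [Finset.mem_erase, Finset.mem_erase] at hx
          rw [hτx x hx.2.1 hx.1]
        rw [hrest, hτa, hτb]
        have hσb : σ b = a := by rw [hb_def]; simp
        rw [hσb]
        have hM := hMonge b a (σ a) a hba hca
        linarith
      exact hineq.trans hτle

/-- For a real Monge matrix, every cycle's weight is dominated by the weight of the
diagonal on its support; in particular the identity attains the tropical permanent. -/
theorem monge_identity_attains_tropical_permanent (n : ℕ) (A : Matrix (Fin n) (Fin n) ℝ)
    (hMonge : ∀ i j k l : Fin n, i < j → k < l → A i l + A j k ≤ A i k + A j l) :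
    (∀ γ : Equiv.Perm (Fin n), γ.IsCycle →
      ∑ j ∈ γ.support, A j (γ j) ≤ ∑ j ∈ γ.support, A j j) ∧
    (∀ σ : Equiv.Perm (Fin n), ∑ i, A i (σ i) ≤ ∑ i, A i i) := by
  have main := monge_perm_le n A hMonge
  constructor
  · intro γ _
    have hsplit : ∀ F : Fin n → ℝ,
        ∑ i, F i = ∑ j ∈ γ.support, F j + ∑ j ∈ Finset.univ \ γ.support, F j := by
      intro F
      rw [← Finset.sum_sdiff (Finset.subset_univ γ.support)]
      ring
    have h1 := hsplit (fun i => A i (γ i))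
    have h2 := hsplit (fun i => A i i)
    have h3 : ∑ j ∈ Finset.univ \ γ.support, A j (γ j)
        = ∑ j ∈ Finset.univ \ γ.support, A j j := by
      apply Finset.sum_congr rfl
      intro x hx
      have : γ x = x := by
        have := (Finset.mem_sdiff.mp hx).2
        simpa [Equiv.Perm.mem_support, not_not] using this
      rw [this]
    have := main γ
    rw [h1, h2, h3] at this
    linarith
  · exact main
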